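/- For 0 < t ≤ π/2, the ellipse E(t) = {(x,y) ∈ ℝ² : x²/(2(t² - (1-cos t)²)) + y²/(2(1-cos t)²) ≤ 1} has area π·√(2(t² - (1-cos t)²))·√2·(1-cos t), and this area is strictly less than the area πt² of the disk of radius t. -/

import Mathlib

open Real MeasureTheory

lemma stmt19_disk_vol : volume {p : ℝ × ℝ | p.1 ^ 2 + p.2 ^ 2 ≤ 1} = ENNReal.ofReal π := by
  have hmeas : MeasurableSet {p : ℝ × ℝ | p.1 ^ 2 + p.2 ^ 2 ≤ 1} := by
    apply measurableSet_le <;> fun_prop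
  have key := Complex.volume_preserving_equiv_real_prod.measure_preimage hmeas.nullMeasurableSet
  have hpre : Complex.measurableEquivRealProd ⁻¹' {p : ℝ × ℝ | p.1 ^ 2 + p.2 ^ 2 ≤ 1}
      = Metric.closedBall (0 : ℂ) 1 := by
    ext z
    have hz : (Complex.measurableEquivRealProd z) = (z.re, z.im) := rfl
    simp only [Set.mem_preimage, Set.mem_setOf_eq, hz, Metric.mem_closedBall, dist_zero_right]
    constructor
    · intro h
      have h2 : ‖z‖ ^ 2 ≤ 1 := by
        rw [Complex.sq_norm, Complex.normSq_apply]; nlinarith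
      nlinarith [norm_nonneg z]
    · intro h
      have h2 : ‖z‖ ^ 2 ≤ 1 := by nlinarith [norm_nonneg z]
      rw [Complex.sq_norm, Complex.normSq_apply] at h2
      nlinarith
  rw [hpre, Complex.volume_closedBall] at key
  rw [← key, ← NNReal.coe_real_pi, ENNReal.ofReal_coe_nnreal]
  simp

lemma stmt19_ellipse_vol {a b : ℝ} (ha : 0 < a) (hb : 0 < b) :
    volume {p : ℝ × ℝ | p.1 ^ 2 / a ^ 2 + p.2 ^ 2 / b ^ 2 ≤ 1}
      = ENNReal.ofReal (π * a * b) := by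
  set f : (ℝ × ℝ) →ₗ[ℝ] (ℝ × ℝ) :=
    LinearMap.prodMap (a⁻¹ • LinearMap.id) (b⁻¹ • LinearMap.id) with hf
  have hfapp : ∀ p : ℝ × ℝ, f p = (a⁻¹ * p.1, b⁻¹ * p.2) := fun p => rfl
  have hdet : LinearMap.det f = a⁻¹ * b⁻¹ := by
    rw [← LinearMap.det_toMatrix (Module.Basis.finTwoProd ℝ)]
    have hM : LinearMap.toMatrix (Module.Basis.finTwoProd ℝ) (Module.Basis.finTwoProd ℝ) f
        = !![a⁻¹, 0; 0, b⁻¹] := by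
      ext i j
      fin_cases i <;> fin_cases j <;>
        simp [LinearMap.toMatrix_apply, hfapp, Module.Basis.finTwoProd_zero, Module.Basis.finTwoProd_one,
          Module.Basis.coe_finTwoProd_repr]
    rw [hM, Matrix.det_fin_two_of]
    ring
  have hset : {p : ℝ × ℝ | p.1 ^ 2 / a ^ 2 + p.2 ^ 2 / b ^ 2 ≤ 1}
      = f ⁻¹' {p : ℝ × ℝ | p.1 ^ 2 + p.2 ^ 2 ≤ 1} := by
    ext p
    simp only [Set.mem_setOf_eq, Set.mem_preimage, hfapp]
    rw [show (a⁻¹ * p.1) ^ 2 = p.1 ^ 2 / a ^ 2 by field_simp,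
        show (b⁻¹ * p.2) ^ 2 = p.2 ^ 2 / b ^ 2 by field_simp]
  rw [hset, Measure.addHaar_preimage_linearMap volume (by rw [hdet]; positivity), hdet,
      stmt19_disk_vol, ← ENNReal.ofReal_mul (by positivity)]
  congr 1
  rw [abs_of_pos (by positivity)]
  field_simp

lemma stmt19_key_ineq {t : ℝ} (ht0 : 0 < t) (ht2 : t ≤ π / 2) :
    Real.sqrt 2 * (1 - Real.cos t) < t := by
  have hpyth := Real.sin_sq_add_cos_sq (t / 2)
  have hcs : Real.cos (t / 2) ^ 2 = 1 / 2 + Real.cos (2 * (t / 2)) / 2 := Real.cos_sq (t / 2)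
  rw [show 2 * (t / 2) = t by ring] at hcs
  have hcos : 1 - Real.cos t = 2 * Real.sin (t / 2) ^ 2 := by linarith
  set s := Real.sin (t / 2) with hs
  have hsnn : 0 ≤ s := Real.sin_nonneg_of_nonneg_of_le_pi (by linarith)
    (by linarith [Real.pi_pos])
  have hslt : s < t / 2 := Real.sin_lt (by linarith)
  have hcnn : 0 ≤ Real.cos t := Real.cos_nonneg_of_mem_Icc ⟨by linarith, ht2⟩
  have hsq : s ^ 2 ≤ 1 / 2 := by linarith
  have h2 : Real.sqrt 2 ^ 2 = 2 := Real.sq_sqrt (by norm_num)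
  have h2pos : (0:ℝ) < Real.sqrt 2 := by positivity
  rw [hcos]
  nlinarith [sq_nonneg (Real.sqrt 2 * s - 1), mul_nonneg h2pos.le hsnn,
    mul_le_mul_of_nonneg_left hslt.le (mul_nonneg h2pos.le hsnn)]

/-- for 0 < t ≤ π/2 and α = 1 - cos t, the minimum-area ellipse
E(t) = {x²/(2(t²-α²)) + y²/(2α²) ≤ 1} has area π √(2(t²-α²)) · √2 α, which is strictly
smaller than the area π t² of the disk of radius t. -/
theorem stmt19 (t : ℝ) (ht : t ∈ Set.Ioc 0 (π / 2)) :
    volume {p : ℝ × ℝ |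
        p.1 ^ 2 / (2 * (t ^ 2 - (1 - Real.cos t) ^ 2))
          + p.2 ^ 2 / (2 * (1 - Real.cos t) ^ 2) ≤ 1}
      = ENNReal.ofReal
          (π * Real.sqrt (2 * (t ^ 2 - (1 - Real.cos t) ^ 2))
            * (Real.sqrt 2 * (1 - Real.cos t)))
    ∧ π * Real.sqrt (2 * (t ^ 2 - (1 - Real.cos t) ^ 2))
        * (Real.sqrt 2 * (1 - Real.cos t)) < π * t ^ 2 := by
  obtain ⟨ht0, ht2⟩ := ht
  set α := 1 - Real.cos t with hα
  have hαpos : 0 < α := by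
    have hcs : Real.cos (t / 2) ^ 2 = 1 / 2 + Real.cos (2 * (t / 2)) / 2 := Real.cos_sq (t / 2)
    have hp := Real.sin_sq_add_cos_sq (t / 2)
    rw [show 2 * (t / 2) = t by ring] at hcs
    have hspos : 0 < Real.sin (t / 2) :=
      Real.sin_pos_of_pos_of_lt_pi (by linarith) (by linarith [Real.pi_pos])
    simp only [hα]
    nlinarith
  have hkey : Real.sqrt 2 * α < t := stmt19_key_ineq ht0 ht2
  have h2α : 2 * α ^ 2 < t ^ 2 := by
    have h1 : (Real.sqrt 2 * α) ^ 2 < t ^ 2 := by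
      apply pow_lt_pow_left₀ hkey (by positivity)
      norm_num
    rwa [mul_pow, Real.sq_sqrt (by norm_num : (0:ℝ) ≤ 2)] at h1
  have hupos : 0 < t ^ 2 - α ^ 2 := by nlinarith
  set a := Real.sqrt (2 * (t ^ 2 - α ^ 2)) with ha
  set b := Real.sqrt 2 * α with hb
  have hapos : 0 < a := Real.sqrt_pos.mpr (by positivity)
  have hbpos : 0 < b := by positivity
  have ha2 : a ^ 2 = 2 * (t ^ 2 - α ^ 2) := Real.sq_sqrt (by positivity)
  have hb2 : b ^ 2 = 2 * α ^ 2 := by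
    rw [hb, mul_pow, Real.sq_sqrt (by norm_num : (0:ℝ) ≤ 2)]
  constructor
  · rw [show {p : ℝ × ℝ | p.1 ^ 2 / (2 * (t ^ 2 - α ^ 2)) + p.2 ^ 2 / (2 * α ^ 2) ≤ 1}
        = {p : ℝ × ℝ | p.1 ^ 2 / a ^ 2 + p.2 ^ 2 / b ^ 2 ≤ 1} by rw [ha2, hb2]]
    exact stmt19_ellipse_vol hapos hbpos
  · have hab : a * b < t ^ 2 := by
      have hsq : (a * b) ^ 2 < (t ^ 2) ^ 2 := by
        rw [mul_pow, ha2, hb2]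
        nlinarith [sq_nonneg (t ^ 2 - 2 * α ^ 2)]
      exact lt_of_pow_lt_pow_left₀ 2 (by positivity) hsq
    have := mul_lt_mul_of_pos_left hab Real.pi_pos
    linarith [this]
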